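/- arXiv:1301.5874 — 5 statements merged into one kernel-verified Lean document; each statement's English description precedes it below -/
import Mathlib

section
/- Let σ > 0, λ > 0, μ ∈ ℝ, and Y = μ + W with W ~ N(0,σ²). Then Cov(Y, HT(Y,λ)) = σ²·P(|Y| > λ) + λ·E[sign(Y)·W·1{|Y| > λ}], where HT(y,λ) = 0 if |y| < λ and HT(y,λ) = y otherwise, and sign is the sign function. -/
open MeasureTheory ProbabilityTheory Filter Real

/-- Scalar hard thresholding at threshold `lam`. -/
noncomputable def HT (lam y : ℝ) : ℝ := if |y| < lam then 0 else y

/-- Covariance of two real random variables. -/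
noncomputable def cov {Ω : Type*} [MeasurableSpace Ω] (μ : Measure Ω) (X Y : Ω → ℝ) : ℝ :=
  ∫ ω, (X ω - ∫ x, X x ∂μ) * (Y ω - ∫ x, Y x ∂μ) ∂μ

section Aux
open Set
open scoped NNReal Topology ENNReal

section Gauss
variable {v : ℝ≥0}

lemma gpdf_form (x : ℝ) :
    gaussianPDFReal 0 v x = (Real.sqrt (2*π*v))⁻¹ * Real.exp (-(2*(v:ℝ))⁻¹ * x^2) := by
  rw [gaussianPDFReal, sub_zero]
  rcases eq_or_ne (v:ℝ) 0 with h | h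
  · simp [h]
  · congr 2
    field_simp

lemma hasDerivAt_neg_v_gpdf (hv : (0:ℝ) < v) (x : ℝ) :
    HasDerivAt (fun t => -(v:ℝ) * gaussianPDFReal 0 v t) (x * gaussianPDFReal 0 v x) x := by
  obtain ⟨b, hb⟩ : ∃ b : ℝ, b = (2*(v:ℝ))⁻¹ := ⟨_, rfl⟩
  obtain ⟨c, hc⟩ : ∃ c : ℝ, c = (Real.sqrt (2*π*v))⁻¹ := ⟨_, rfl⟩
  have h1 : HasDerivAt (fun t : ℝ => -b * t^2) (-b * (2*x)) x := by
    simpa using (hasDerivAt_pow 2 x).const_mul (-b)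
  have h2 := h1.exp
  have h3 := h2.const_mul (-(v:ℝ) * c)
  have hfun : (fun t => -(v:ℝ) * gaussianPDFReal 0 v t)
      = fun t => (-(v:ℝ)*c) * Real.exp (-b * t^2) := by
    funext t; rw [gpdf_form, hb, hc]; ring
  have hval : x * gaussianPDFReal 0 v x
      = -(v:ℝ) * c * (Real.exp (-b * x^2) * (-b * (2*x))) := by
    rw [gpdf_form, hb, hc]
    have hv' : (v:ℝ) ≠ 0 := ne_of_gt hv
    field_simp
  rw [hfun, hval]
  exact h3

lemma hasDerivAt_gpdf (hv : (0:ℝ) < v) (x : ℝ) :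
    HasDerivAt (gaussianPDFReal 0 v) (-(v:ℝ)⁻¹ * (x * gaussianPDFReal 0 v x)) x := by
  have h := (hasDerivAt_neg_v_gpdf hv x).const_mul (-(v:ℝ)⁻¹)
  have hv' : (v:ℝ) ≠ 0 := ne_of_gt hv
  have hfun : (fun t => -(v:ℝ)⁻¹ * (-(v:ℝ) * gaussianPDFReal 0 v t)) = gaussianPDFReal 0 v := by
    funext t; field_simp
  rwa [hfun] at h

lemma tendsto_gpdf_atTop (hv : (0:ℝ) < v) :
    Tendsto (gaussianPDFReal 0 v) atTop (𝓝 0) := by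
  have hb : (0:ℝ) < (2*(v:ℝ))⁻¹ := by positivity
  have h1 : Tendsto (fun x : ℝ => (2*(v:ℝ))⁻¹ * x^2) atTop atTop :=
    (tendsto_pow_atTop two_ne_zero).const_mul_atTop hb
  have h2 : Tendsto (fun x : ℝ => -(2*(v:ℝ))⁻¹ * x^2) atTop atBot := by
    have := tendsto_neg_atTop_atBot.comp h1
    refine this.congr fun x => by simp [Function.comp]; try ring
  have h3 : Tendsto (fun x : ℝ => Real.exp (-(2*(v:ℝ))⁻¹ * x^2)) atTop (𝓝 0) :=
    Real.tendsto_exp_atBot.comp h2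
  have h4 := h3.const_mul ((Real.sqrt (2*π*v))⁻¹)
  rw [mul_zero] at h4
  exact h4.congr fun x => (gpdf_form x).symm

lemma tendsto_gpdf_atBot (hv : (0:ℝ) < v) :
    Tendsto (gaussianPDFReal 0 v) atBot (𝓝 0) := by
  have h := (tendsto_gpdf_atTop hv).comp tendsto_neg_atBot_atTop
  refine h.congr fun x => ?_
  simp only [Function.comp]
  rw [gpdf_form, gpdf_form, neg_pow]
  norm_num

lemma tendsto_x_gpdf_atTop (hv : (0:ℝ) < v) :
    Tendsto (fun x : ℝ => x * gaussianPDFReal 0 v x) atTop (𝓝 0) := by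
  have hb : (0:ℝ) < (2*(v:ℝ))⁻¹ := by positivity
  have hhalf : Tendsto (fun x : ℝ => Real.exp (-(1/2) * x)) atTop (𝓝 0) := by
    rw [Real.tendsto_exp_comp_nhds_zero]
    have h0 : Tendsto (fun x : ℝ => (1/2 : ℝ) * x) atTop atTop :=
      tendsto_id.const_mul_atTop (by norm_num)
    have := tendsto_neg_atTop_atBot.comp h0
    exact this.congr fun x => by simp [Function.comp]
  have h := (rpow_mul_exp_neg_mul_sq_isLittleO_exp_neg hb 1).isBigO.trans_tendsto hhalf
  have h2 := h.const_mul ((Real.sqrt (2*π*v))⁻¹)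
  rw [mul_zero] at h2
  refine (h2.congr' ?_)
  filter_upwards [eventually_ge_atTop (0:ℝ)] with x hx
  rw [Real.rpow_one, gpdf_form]
  ring

lemma tendsto_x_gpdf_atBot (hv : (0:ℝ) < v) :
    Tendsto (fun x : ℝ => x * gaussianPDFReal 0 v x) atBot (𝓝 0) := by
  have h := ((tendsto_x_gpdf_atTop hv).comp tendsto_neg_atBot_atTop).neg
  rw [neg_zero] at h
  refine h.congr fun x => ?_
  simp only [Function.comp]
  rw [gpdf_form, gpdf_form, neg_pow]
  norm_num
  try ring

lemma integrable_x_gpdf (hv : (0:ℝ) < v) :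
    Integrable (fun x : ℝ => x * gaussianPDFReal 0 v x) := by
  have h : Integrable (fun x : ℝ => x * Real.exp (-((2*(v:ℝ))⁻¹) * x^2)) :=
    integrable_mul_exp_neg_mul_sq (by positivity)
  have h2 := h.const_mul ((Real.sqrt (2*π*(v:ℝ)))⁻¹)
  refine h2.congr (Eventually.of_forall fun x => ?_)
  simp only [gpdf_form]
  ring_nf

lemma integrable_sq_gpdf (hv : (0:ℝ) < v) :
    Integrable (fun x : ℝ => x^2 * gaussianPDFReal 0 v x) := by
  have h : Integrable (fun x : ℝ => x ^ (2:ℝ) * Real.exp (-((2*(v:ℝ))⁻¹) * x^2)) :=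
    integrable_rpow_mul_exp_neg_mul_sq (by positivity) (by norm_num)
  have hx : ∀ x:ℝ, x ^ (2:ℝ) = x^2 := fun x => by
    rw [show (2:ℝ) = ((2:ℕ):ℝ) by norm_num, Real.rpow_natCast]
  have h2 := h.const_mul ((Real.sqrt (2*π*(v:ℝ)))⁻¹)
  refine h2.congr (Eventually.of_forall fun x => ?_)
  simp only [gpdf_form, hx]
  ring

lemma hasDerivAt_neg_v_x_gpdf (hv : (0:ℝ) < v) (x : ℝ) :
    HasDerivAt (fun t => -(v:ℝ) * (t * gaussianPDFReal 0 v t))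
      (x^2 * gaussianPDFReal 0 v x - (v:ℝ) * gaussianPDFReal 0 v x) x := by
  have h := ((hasDerivAt_id x).mul (hasDerivAt_gpdf hv x)).const_mul (-(v:ℝ))
  have hv' : (v:ℝ) ≠ 0 := ne_of_gt hv
  have h' : HasDerivAt (fun t => -(v:ℝ) * (t * gaussianPDFReal 0 v t))
      (-(v:ℝ) * (1 * gaussianPDFReal 0 v x + x * (-(v:ℝ)⁻¹ * (x * gaussianPDFReal 0 v x)))) x := h
  convert h' using 1
  field_simp
  ring

lemma J1 (hv : (0:ℝ) < v) (a : ℝ) :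
    ∫ x in Ioi a, x * gaussianPDFReal 0 v x = (v:ℝ) * gaussianPDFReal 0 v a := by
  have htop : Tendsto (fun t => -(v:ℝ) * gaussianPDFReal 0 v t) atTop (𝓝 0) := by
    simpa using (tendsto_gpdf_atTop hv).const_mul (-(v:ℝ))
  have h := integral_Ioi_of_hasDerivAt_of_tendsto' (a := a)
    (fun x _ => hasDerivAt_neg_v_gpdf hv x) ((integrable_x_gpdf hv).integrableOn) htop
  rw [h]; ring

lemma J2 (hv : (0:ℝ) < v) (a : ℝ) :
    ∫ x in Iio a, x * gaussianPDFReal 0 v x = -((v:ℝ) * gaussianPDFReal 0 v a) := by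
  have hbot : Tendsto (fun t => -(v:ℝ) * gaussianPDFReal 0 v t) atBot (𝓝 0) := by
    simpa using (tendsto_gpdf_atBot hv).const_mul (-(v:ℝ))
  have h := integral_Iic_of_hasDerivAt_of_tendsto' (a := a)
    (fun x _ => hasDerivAt_neg_v_gpdf hv x) ((integrable_x_gpdf hv).integrableOn) hbot
  rw [setIntegral_congr_set (Iio_ae_eq_Iic), h]; ring

lemma K1 (hv : (0:ℝ) < v) (a : ℝ) :
    ∫ x in Ioi a, x^2 * gaussianPDFReal 0 v x
      = (v:ℝ) * a * gaussianPDFReal 0 v a + (v:ℝ) * ∫ x in Ioi a, gaussianPDFReal 0 v x := by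
  have htop : Tendsto (fun t => -(v:ℝ) * (t * gaussianPDFReal 0 v t)) atTop (𝓝 0) := by
    simpa using (tendsto_x_gpdf_atTop hv).const_mul (-(v:ℝ))
  have hint : IntegrableOn
      (fun x => x^2 * gaussianPDFReal 0 v x - (v:ℝ) * gaussianPDFReal 0 v x) (Ioi a) :=
    ((integrable_sq_gpdf hv).sub ((integrable_gaussianPDFReal 0 v).const_mul (v:ℝ))).integrableOn
  have h := integral_Ioi_of_hasDerivAt_of_tendsto'
    (fun x _ => hasDerivAt_neg_v_x_gpdf hv x) hint htop
  rw [integral_sub ((integrable_sq_gpdf hv).integrableOn)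
    (((integrable_gaussianPDFReal 0 v).const_mul (v:ℝ)).integrableOn),
    integral_const_mul] at h
  linarith [h]

lemma K2 (hv : (0:ℝ) < v) (a : ℝ) :
    ∫ x in Iio a, x^2 * gaussianPDFReal 0 v x
      = -((v:ℝ) * a * gaussianPDFReal 0 v a) + (v:ℝ) * ∫ x in Iio a, gaussianPDFReal 0 v x := by
  have hbot : Tendsto (fun t => -(v:ℝ) * (t * gaussianPDFReal 0 v t)) atBot (𝓝 0) := by
    simpa using (tendsto_x_gpdf_atBot hv).const_mul (-(v:ℝ))
  have hint : IntegrableOn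
      (fun x => x^2 * gaussianPDFReal 0 v x - (v:ℝ) * gaussianPDFReal 0 v x) (Iic a) :=
    ((integrable_sq_gpdf hv).sub ((integrable_gaussianPDFReal 0 v).const_mul (v:ℝ))).integrableOn
  have h := integral_Iic_of_hasDerivAt_of_tendsto'
    (fun x _ => hasDerivAt_neg_v_x_gpdf hv x) hint hbot
  rw [integral_sub ((integrable_sq_gpdf hv).integrableOn)
    (((integrable_gaussianPDFReal 0 v).const_mul (v:ℝ)).integrableOn),
    integral_const_mul] at h
  rw [setIntegral_congr_set (Iio_ae_eq_Iic),
      setIntegral_congr_set (μ := volume) (Iio_ae_eq_Iic)]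
  linarith [h]



lemma setS_eq (lam μ₀ : ℝ) :
    {x : ℝ | lam < |μ₀ + x|} = Iio (-lam - μ₀) ∪ Ioi (lam - μ₀) := by
  ext x
  simp only [mem_setOf_eq, mem_union, mem_Iio, mem_Ioi, lt_abs]
  constructor
  · rintro (h | h)
    · right; linarith
    · left; linarith
  · rintro (h | h)
    · right; linarith
    · left; linarith

lemma core (hv : (0:ℝ) < v) {lam : ℝ} (hlam : 0 < lam) (μ₀ : ℝ) :
    ∫ x, (x * HT lam (μ₀ + x)) * gaussianPDFReal 0 v x
      = (v:ℝ) * (∫ x in {x : ℝ | lam < |μ₀ + x|}, gaussianPDFReal 0 v x)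
        + lam * ∫ x, (if lam < |μ₀ + x| then Real.sign (μ₀ + x) * x else 0)
            * gaussianPDFReal 0 v x := by
  set φ := gaussianPDFReal 0 v with hφ
  set a : ℝ := lam - μ₀ with ha
  set b : ℝ := -lam - μ₀ with hb
  have hba : b ≤ a := by rw [ha, hb]; linarith
  have hdisj : Disjoint (Iio b) (Ioi a) :=
    (Iic_disjoint_Ioi hba).mono_left Iio_subset_Iic_self
  have hmeasA : MeasurableSet (Ioi a) := measurableSet_Ioi
  have hmeasB : MeasurableSet (Iio b) := measurableSet_Iio
  have hmeasU : MeasurableSet (Iio b ∪ Ioi a) := hmeasB.union hmeasA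
  have hf_int : Integrable (fun x => x * (μ₀ + x) * φ x) := by
    have hfe : (fun x => x * (μ₀ + x) * φ x)
        = fun x => μ₀ * (x * φ x) + x^2 * φ x := by funext x; ring
    rw [hfe]
    exact ((integrable_x_gpdf hv).const_mul μ₀).add (integrable_sq_gpdf hv)
  -- LHS
  have hmem_iff : ∀ x : ℝ, x ∈ Iio b ∪ Ioi a ↔ lam < |μ₀ + x| := by
    intro x
    rw [ha, hb, ← setS_eq lam μ₀]
    exact Iff.rfl
  have h1 : (fun x => (x * HT lam (μ₀ + x)) * φ x)
      =ᵐ[volume] (Iio b ∪ Ioi a).indicator (fun x => x * (μ₀ + x) * φ x) := by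
    have hae : ∀ᵐ x : ℝ, x ≠ a ∧ x ≠ b := by
      have h1 : (volume : Measure ℝ) {x | ¬ (x ≠ a ∧ x ≠ b)} = 0 := by
        have : {x : ℝ | ¬ (x ≠ a ∧ x ≠ b)} ⊆ {a} ∪ {b} := by
          intro x hx
          simp only [mem_setOf_eq, not_and_or, not_not] at hx
          rcases hx with h | h
          · exact Or.inl h
          · exact Or.inr h
        exact measure_mono_null this
          (measure_union_null (measure_singleton a) (measure_singleton b))
      exact ae_iff.2 h1
    filter_upwards [hae] with x ⟨hxa, hxb⟩
    by_cases hx : lam < |μ₀ + x|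
    · have hmem : x ∈ Iio b ∪ Ioi a := (hmem_iff x).2 hx
      rw [indicator_of_mem hmem]
      have hnot : ¬ |μ₀ + x| < lam := by linarith
      simp only [HT, if_neg hnot]
      try ring
    · have hmem : x ∉ Iio b ∪ Ioi a := fun hc => hx ((hmem_iff x).1 hc)
      rw [indicator_of_notMem hmem]
      have hlt : |μ₀ + x| < lam := by
        rcases lt_or_eq_of_le (not_lt.1 hx) with h | h
        · exact h
        · exfalso
          rcases (abs_eq hlam.le).1 h with h' | h'
          · exact hxa (by rw [ha]; linarith)
          · exact hxb (by rw [hb]; linarith)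
      simp [HT, hlt]
  -- sign function rewrite
  have h2 : (fun x => (if lam < |μ₀ + x| then Real.sign (μ₀ + x) * x else 0) * φ x)
      = (Iio b ∪ Ioi a).indicator (fun x => Real.sign (μ₀ + x) * x * φ x) := by
    funext x
    by_cases hx : lam < |μ₀ + x|
    · have hmem : x ∈ Iio b ∪ Ioi a := (hmem_iff x).2 hx
      rw [if_pos hx, indicator_of_mem hmem]
    · have hmem : x ∉ Iio b ∪ Ioi a := fun hc => hx ((hmem_iff x).1 hc)
      rw [if_neg hx, indicator_of_notMem hmem, zero_mul]
  have hneg_int : Integrable (fun x : ℝ => -(x * gaussianPDFReal 0 v x)) :=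
    (integrable_x_gpdf hv).neg
  have hsgn_int_B : IntegrableOn (fun x => Real.sign (μ₀ + x) * x * φ x) (Iio b) := by
    refine (hneg_int.integrableOn (s := Iio b)).congr_fun ?_ hmeasB
    intro x hx
    have hneg : μ₀ + x < 0 := by
      simp only [mem_Iio, hb] at hx; linarith
    show -(x * gaussianPDFReal 0 v x) = Real.sign (μ₀ + x) * x * φ x
    rw [Real.sign_of_neg hneg]; ring
  have hsgn_int_A : IntegrableOn (fun x => Real.sign (μ₀ + x) * x * φ x) (Ioi a) := by
    refine ((integrable_x_gpdf hv).integrableOn (s := Ioi a)).congr_fun ?_ hmeasA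
    intro x hx
    have hpos : 0 < μ₀ + x := by
      simp only [mem_Ioi, ha] at hx; linarith
    show x * gaussianPDFReal 0 v x = Real.sign (μ₀ + x) * x * φ x
    rw [Real.sign_of_pos hpos]; ring
  -- compute pieces
  have hB_sign : ∫ x in Iio b, Real.sign (μ₀ + x) * x * φ x = (v:ℝ) * φ b := by
    have : ∫ x in Iio b, Real.sign (μ₀ + x) * x * φ x = ∫ x in Iio b, -(x * φ x) := by
      refine setIntegral_congr_fun hmeasB fun x hx => ?_
      have hneg : μ₀ + x < 0 := by simp only [mem_Iio, hb] at hx; linarith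
      rw [Real.sign_of_neg hneg]; ring
    rw [this, integral_neg, J2 hv b]; ring
  have hA_sign : ∫ x in Ioi a, Real.sign (μ₀ + x) * x * φ x = (v:ℝ) * φ a := by
    have : ∫ x in Ioi a, Real.sign (μ₀ + x) * x * φ x = ∫ x in Ioi a, x * φ x := by
      refine setIntegral_congr_fun hmeasA fun x hx => ?_
      have hpos : 0 < μ₀ + x := by simp only [mem_Ioi, ha] at hx; linarith
      rw [Real.sign_of_pos hpos]; ring
    rw [this, J1 hv a]
  have hB_main : ∫ x in Iio b, x * (μ₀ + x) * φ x
      = μ₀ * (-((v:ℝ) * φ b)) + (-((v:ℝ) * b * φ b) + (v:ℝ) * ∫ x in Iio b, φ x) := by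
    have hfe : ∀ x : ℝ, x * (μ₀ + x) * φ x = μ₀ * (x * φ x) + x^2 * φ x := fun x => by ring
    rw [setIntegral_congr_fun hmeasB fun x _ => hfe x,
      integral_add (((integrable_x_gpdf hv).const_mul μ₀).integrableOn)
        ((integrable_sq_gpdf hv).integrableOn),
      integral_const_mul, J2 hv b, K2 hv b]
  have hA_main : ∫ x in Ioi a, x * (μ₀ + x) * φ x
      = μ₀ * ((v:ℝ) * φ a) + ((v:ℝ) * a * φ a + (v:ℝ) * ∫ x in Ioi a, φ x) := by
    have hfe : ∀ x : ℝ, x * (μ₀ + x) * φ x = μ₀ * (x * φ x) + x^2 * φ x := fun x => by ring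
    rw [setIntegral_congr_fun hmeasA fun x _ => hfe x,
      integral_add (((integrable_x_gpdf hv).const_mul μ₀).integrableOn)
        ((integrable_sq_gpdf hv).integrableOn),
      integral_const_mul, J1 hv a, K1 hv a]
  rw [integral_congr_ae h1, h2, integral_indicator hmeasU, integral_indicator hmeasU,
    setIntegral_union hdisj hmeasA hf_int.integrableOn hf_int.integrableOn,
    setIntegral_union hdisj hmeasA hsgn_int_B hsgn_int_A,
    setS_eq lam μ₀, ← ha, ← hb]
  have hsplit : ∫ x in Iio b ∪ Ioi a, φ x
      = (∫ x in Iio b, φ x) + ∫ x in Ioi a, φ x :=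
    setIntegral_union hdisj hmeasA (integrable_gaussianPDFReal 0 v).integrableOn
      (integrable_gaussianPDFReal 0 v).integrableOn
  rw [hsplit, hB_main, hA_main, hB_sign, hA_sign, ha, hb]
  ring

end Gauss

section Transfer
variable {v : ℝ≥0} {Ω : Type*} [MeasurableSpace Ω]

lemma gpdf_toNNReal_meas :
    Measurable (fun x => (gaussianPDFReal 0 v x).toNNReal) :=
  measurable_real_toNNReal.comp (measurable_gaussianPDFReal 0 v)

lemma gaussianReal_eq_withDensity (hv : v ≠ 0) :
    gaussianReal 0 v = volume.withDensity
      (fun x => ((gaussianPDFReal 0 v x).toNNReal : ℝ≥0∞)) := by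
  rw [gaussianReal_of_var_ne_zero 0 hv]
  rfl

lemma integral_comp_gauss (hv : v ≠ 0) (μpr : Measure Ω) {W : Ω → ℝ} (hmeas : Measurable W)
    (hdist : Measure.map W μpr = gaussianReal 0 v) {g : ℝ → ℝ} (hg : Measurable g) :
    ∫ ω, g (W ω) ∂μpr = ∫ x, g x * gaussianPDFReal 0 v x := by
  rw [← integral_map hmeas.aemeasurable hg.aestronglyMeasurable, hdist,
    gaussianReal_eq_withDensity hv,
    integral_withDensity_eq_integral_smul gpdf_toNNReal_meas g]
  congr 1
  funext x
  rw [NNReal.smul_def, smul_eq_mul, Real.coe_toNNReal _ (gaussianPDFReal_nonneg 0 v x), mul_comm]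

lemma integrable_comp_gauss (hv : v ≠ 0) (μpr : Measure Ω) {W : Ω → ℝ} (hmeas : Measurable W)
    (hdist : Measure.map W μpr = gaussianReal 0 v) {g : ℝ → ℝ} (hg : Measurable g) :
    Integrable (fun ω => g (W ω)) μpr ↔ Integrable (fun x => g x * gaussianPDFReal 0 v x) := by
  have h1 : Integrable (fun ω => g (W ω)) μpr ↔ Integrable g (Measure.map W μpr) := by
    rw [integrable_map_measure (by rw [hdist]; exact hg.aestronglyMeasurable) hmeas.aemeasurable]
    rfl
  rw [h1, hdist, gaussianReal_eq_withDensity hv,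
    integrable_withDensity_iff_integrable_smul gpdf_toNNReal_meas]
  have hfe : (fun x => (gaussianPDFReal 0 v x).toNNReal • g x)
      = fun x => g x * gaussianPDFReal 0 v x := funext fun x => by
    rw [NNReal.smul_def, smul_eq_mul, Real.coe_toNNReal _ (gaussianPDFReal_nonneg 0 v x),
      mul_comm]
  rw [hfe]

lemma measurable_real_sign : Measurable Real.sign := by
  have : Real.sign = fun r : ℝ => if r < 0 then (-1:ℝ) else if 0 < r then 1 else 0 :=
    funext fun r => rfl
  rw [this]
  exact Measurable.ite (measurableSet_lt measurable_id measurable_const) measurable_const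
    (Measurable.ite (measurableSet_lt measurable_const measurable_id) measurable_const
      measurable_const)

end Transfer

section Main
open Set
open scoped NNReal Topology ENNReal

/-- `Cov(Y, HT(Y,λ)) = σ²·P(|Y| > λ) + λ·E[sign(Y)·W·1{|Y| > λ}]`
for `Y = μ₀ + W`, `W ~ N(0, σ²)`. -/
theorem cov_hard_thresholding_decomposition
    {Ω : Type*} [MeasurableSpace Ω] (μpr : Measure Ω) [IsProbabilityMeasure μpr]
    (σ lam μ₀ : ℝ) (hσ : 0 < σ) (hlam : 0 < lam)
    (W : Ω → ℝ) (hmeas : Measurable W)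
    (hdist : Measure.map W μpr = gaussianReal 0 ⟨σ ^ 2, sq_nonneg σ⟩) :
    cov μpr (fun ω => μ₀ + W ω) (fun ω => HT lam (μ₀ + W ω))
      = σ ^ 2 * (μpr {ω | lam < |μ₀ + W ω|}).toReal +
        lam * ∫ ω, (if lam < |μ₀ + W ω| then Real.sign (μ₀ + W ω) * W ω else 0) ∂μpr := by
  set v : ℝ≥0 := ⟨σ ^ 2, sq_nonneg σ⟩ with hvdef
  have hv : (0:ℝ) < v := by
    show (0:ℝ) < σ ^ 2
    positivity
  have hvne : v ≠ 0 := (NNReal.coe_pos.1 hv).ne'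
  have hcoe : (v:ℝ) = σ ^ 2 := rfl
  have hadd : Measurable (fun x : ℝ => μ₀ + x) := measurable_const.add measurable_id
  have hHTm : Measurable (HT lam) :=
    Measurable.ite (measurableSet_lt measurable_abs measurable_const) measurable_const
      measurable_id
  have hgmul : Measurable (fun x : ℝ => x * HT lam (μ₀ + x)) :=
    measurable_id.mul (hHTm.comp hadd)
  have hset : MeasurableSet {x : ℝ | lam < |μ₀ + x|} :=
    measurableSet_lt measurable_const hadd.abs
  have hgsign : Measurable
      (fun x : ℝ => if lam < |μ₀ + x| then Real.sign (μ₀ + x) * x else 0) :=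
    Measurable.ite hset ((measurable_real_sign.comp hadd).mul measurable_id) measurable_const
  have hφnn : ∀ x, 0 ≤ gaussianPDFReal 0 v x := gaussianPDFReal_nonneg 0 v
  have hφm : Measurable (gaussianPDFReal 0 v) := measurable_gaussianPDFReal 0 v
  have hHT_abs : ∀ y : ℝ, |HT lam y| ≤ |y| := by
    intro y
    unfold HT
    split
    · simp [abs_nonneg]
    · exact le_refl _
  -- real-side integrabilities
  have hIx := integrable_x_gpdf (v := v) hv
  have hIx2 := integrable_sq_gpdf (v := v) hv
  have hIφ := integrable_gaussianPDFReal 0 v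
  have hI_WZ : Integrable (fun x : ℝ => (x * HT lam (μ₀ + x)) * gaussianPDFReal 0 v x) := by
    refine Integrable.mono' ((hIx.abs.const_mul |μ₀|).add hIx2)
      (hgmul.mul hφm).aestronglyMeasurable (Eventually.of_forall fun x => ?_)
    have h1 : |x * HT lam (μ₀ + x) * gaussianPDFReal 0 v x|
        ≤ |x| * (|μ₀| + |x|) * gaussianPDFReal 0 v x := by
      rw [abs_mul, abs_mul, abs_of_nonneg (hφnn x)]
      gcongr <;> first
        | exact hφnn x
        | exact (hHT_abs _).trans (abs_add_le μ₀ x)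
    refine (le_trans (by exact h1) (le_of_eq ?_))
    show |x| * (|μ₀| + |x|) * gaussianPDFReal 0 v x
      = |μ₀| * |x * gaussianPDFReal 0 v x| + x ^ 2 * gaussianPDFReal 0 v x
    rw [abs_mul, abs_of_nonneg (hφnn x), ← sq_abs]
    ring
  have hI_Z : Integrable (fun x : ℝ => HT lam (μ₀ + x) * gaussianPDFReal 0 v x) := by
    refine Integrable.mono' ((hIφ.const_mul |μ₀|).add hIx.abs)
      ((hHTm.comp hadd).mul hφm).aestronglyMeasurable (Eventually.of_forall fun x => ?_)
    have h1 : |HT lam (μ₀ + x) * gaussianPDFReal 0 v x|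
        ≤ (|μ₀| + |x|) * gaussianPDFReal 0 v x := by
      rw [abs_mul, abs_of_nonneg (hφnn x)]
      gcongr <;> first
        | exact hφnn x
        | exact (hHT_abs _).trans (abs_add_le μ₀ x)
    refine (le_trans (by exact h1) (le_of_eq ?_))
    show (|μ₀| + |x|) * gaussianPDFReal 0 v x
      = |μ₀| * gaussianPDFReal 0 v x + |x * gaussianPDFReal 0 v x|
    rw [abs_mul, abs_of_nonneg (hφnn x)]
    ring
  have hsign_abs : ∀ y : ℝ, |Real.sign y| ≤ 1 := by
    intro y
    rcases lt_trichotomy y 0 with h | h | h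
    · rw [Real.sign_of_neg h]; norm_num
    · rw [h, Real.sign_zero]; norm_num
    · rw [Real.sign_of_pos h]; norm_num
  have hI_S : Integrable (fun x : ℝ =>
      (if lam < |μ₀ + x| then Real.sign (μ₀ + x) * x else 0) * gaussianPDFReal 0 v x) := by
    refine Integrable.mono' hIx.abs
      (hgsign.mul hφm).aestronglyMeasurable (Eventually.of_forall fun x => ?_)
    rw [Real.norm_eq_abs, abs_mul, abs_of_nonneg (hφnn x), abs_mul, abs_of_nonneg (hφnn x)]
    have hb : |if lam < |μ₀ + x| then Real.sign (μ₀ + x) * x else 0| ≤ |x| := by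
      split
      · rw [abs_mul]
        calc |Real.sign (μ₀ + x)| * |x| ≤ 1 * |x| := by gcongr ?_ * _; exact hsign_abs _
          _ = |x| := one_mul _
      · simp [abs_nonneg]
    exact mul_le_mul_of_nonneg_right hb (hφnn x)
  -- probability-side integrabilities
  have hW_int : Integrable W μpr := by
    have := (integrable_comp_gauss hvne μpr hmeas hdist (g := fun x => x) measurable_id).2
      (by simpa using hIx)
    simpa using this
  have hWZ_int : Integrable (fun ω => W ω * HT lam (μ₀ + W ω)) μpr :=
    (integrable_comp_gauss hvne μpr hmeas hdist hgmul).2 hI_WZ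
  have hZ_int : Integrable (fun ω => HT lam (μ₀ + W ω)) μpr :=
    (integrable_comp_gauss hvne μpr hmeas hdist (hHTm.comp hadd)).2 hI_Z
  -- expectations
  have hEW : ∫ ω, W ω ∂μpr = 0 := by
    have h0 : ∫ ω, W ω ∂μpr = ∫ x, x * gaussianPDFReal 0 v x :=
      integral_comp_gauss hvne μpr hmeas hdist (g := fun x => x) measurable_id
    rw [h0, ← intervalIntegral.integral_Iic_add_Ioi (hIx.integrableOn) (hIx.integrableOn)]
    have h1 : ∫ x in Iic (0:ℝ), x * gaussianPDFReal 0 v x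
        = -((v:ℝ) * gaussianPDFReal 0 v 0) := by
      rw [← setIntegral_congr_set Iio_ae_eq_Iic]
      exact J2 hv 0
    rw [h1, J1 hv 0]
    ring
  have hEY : ∫ ω, (μ₀ + W ω) ∂μpr = μ₀ := by
    rw [integral_add (integrable_const μ₀) hW_int, hEW, integral_const]
    simp
  -- covariance reduction
  have hcov : cov μpr (fun ω => μ₀ + W ω) (fun ω => HT lam (μ₀ + W ω))
      = ∫ ω, W ω * HT lam (μ₀ + W ω) ∂μpr := by
    unfold cov
    rw [hEY]
    set c : ℝ := ∫ ω, HT lam (μ₀ + W ω) ∂μpr with hc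
    have hfe : (fun ω => (μ₀ + W ω - μ₀) * (HT lam (μ₀ + W ω) - c))
        = fun ω => W ω * HT lam (μ₀ + W ω) - c * W ω := funext fun ω => by ring
    rw [hfe, integral_sub hWZ_int (hW_int.const_mul c), integral_const_mul, hEW, mul_zero,
      sub_zero]
  -- measure transfer
  have hmeaseq : (μpr {ω | lam < |μ₀ + W ω|}).toReal
      = ∫ x in {x : ℝ | lam < |μ₀ + x|}, gaussianPDFReal 0 v x := by
    have hpre : {ω | lam < |μ₀ + W ω|} = W ⁻¹' {x : ℝ | lam < |μ₀ + x|} := rfl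
    rw [hpre, ← Measure.map_apply hmeas hset, hdist,
      gaussianReal_apply_eq_integral 0 hvne,
      ENNReal.toReal_ofReal (setIntegral_nonneg hset fun x _ => hφnn x)]
  -- sign integral transfer
  have hsigneq : ∫ ω, (if lam < |μ₀ + W ω| then Real.sign (μ₀ + W ω) * W ω else 0) ∂μpr
      = ∫ x, (if lam < |μ₀ + x| then Real.sign (μ₀ + x) * x else 0)
          * gaussianPDFReal 0 v x :=
    integral_comp_gauss hvne μpr hmeas hdist hgsign
  have hmain : ∫ ω, W ω * HT lam (μ₀ + W ω) ∂μpr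
      = ∫ x, (x * HT lam (μ₀ + x)) * gaussianPDFReal 0 v x :=
    integral_comp_gauss hvne μpr hmeas hdist hgmul
  rw [hcov, hmain, core hv hlam μ₀, ← hmeaseq, ← hsigneq, hcoe]

end Main
end Aux
end

section
/- Let σ > 0, λ > 0, μ ∈ ℝ, and Y = μ + W with W ~ N(0,σ²). Then E[sign(Y)·W·1{|Y| > λ}] = (σ/√(2π))·[exp(−(μ + λ)²/(2σ²)) + exp(−(μ − λ)²/(2σ²))]. -/
open MeasureTheory ProbabilityTheory Filter Real
open scoped NNReal ENNReal

lemma aux_deriv {v : ℝ} (hv : 0 < v) (x : ℝ) :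
    HasDerivAt (fun x : ℝ => -v * Real.exp (-x ^ 2 / (2 * v)))
      (x * Real.exp (-x ^ 2 / (2 * v))) x := by
  have h1 : HasDerivAt (fun x : ℝ => -x ^ 2 / (2 * v)) (-x / v) x := by
    have := ((hasDerivAt_pow 2 x).neg).div_const (2 * v)
    refine this.congr_deriv ?_
    field_simp
    ring
  have := (h1.exp).const_mul (-v)
  refine this.congr_deriv ?_
  field_simp

lemma aux_tendsto_exp {v : ℝ} (hv : 0 < v) :
    Tendsto (fun x : ℝ => Real.exp (-x ^ 2 / (2 * v))) atTop (nhds 0) := by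
  refine Real.tendsto_exp_atBot.comp ?_
  have h : Tendsto (fun x : ℝ => x ^ 2 / (2 * v)) atTop atTop :=
    (tendsto_pow_atTop two_ne_zero).atTop_div_const (by positivity)
  simpa [Function.comp_def, neg_div] using tendsto_neg_atTop_atBot.comp h

lemma aux_int {v : ℝ} (hv : 0 < v) :
    Integrable (fun x : ℝ => x * Real.exp (-x ^ 2 / (2 * v))) := by
  have h := integrable_mul_exp_neg_mul_sq (b := 1 / (2 * v)) (by positivity)
  refine h.congr (ae_of_all _ fun x => ?_)
  have : -(1 / (2 * v)) * x ^ 2 = -x ^ 2 / (2 * v) := by field_simp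
  simp only [this]

lemma aux_Ioi {v : ℝ} (hv : 0 < v) (a : ℝ) :
    ∫ x in Set.Ioi a, x * Real.exp (-x ^ 2 / (2 * v)) = v * Real.exp (-a ^ 2 / (2 * v)) := by
  have h := integral_Ioi_of_hasDerivAt_of_tendsto' (a := a) (fun x _ => aux_deriv hv x)
    (aux_int hv).integrableOn (by simpa using ((aux_tendsto_exp hv).const_mul (-v)))
  rw [h]; ring

lemma aux_Iio {v : ℝ} (hv : 0 < v) (b : ℝ) :
    ∫ x in Set.Iio b, -x * Real.exp (-x ^ 2 / (2 * v)) = v * Real.exp (-b ^ 2 / (2 * v)) := by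
  have hderiv : ∀ x ∈ Set.Iic b, HasDerivAt (fun x : ℝ => v * Real.exp (-x ^ 2 / (2 * v)))
      (-x * Real.exp (-x ^ 2 / (2 * v))) x := by
    intro x _
    have := (aux_deriv hv x).neg
    simp only [Pi.neg_def, neg_mul, neg_neg] at this
    exact this.congr_deriv (by ring)
  have hint : IntegrableOn (fun x : ℝ => -x * Real.exp (-x ^ 2 / (2 * v))) (Set.Iic b) :=
    ((aux_int hv).neg.congr (ae_of_all _ fun x => by dsimp; ring)).integrableOn
  have htend : Tendsto (fun x : ℝ => v * Real.exp (-x ^ 2 / (2 * v))) atBot (nhds 0) := by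
    have h0 : Tendsto (fun x : ℝ => v * Real.exp (-x ^ 2 / (2 * v))) atTop (nhds 0) := by
      simpa using (aux_tendsto_exp hv).const_mul v
    have hcomp := h0.comp tendsto_neg_atBot_atTop
    simpa [Function.comp_def, neg_sq] using hcomp
  have h := integral_Iic_of_hasDerivAt_of_tendsto' hderiv hint htend
  rw [← integral_Iic_eq_integral_Iio, h]
  ring

/-- `E[sign(Y)·W·1{|Y| > λ}] = (σ/√(2π))·[exp(−(μ₀+λ)²/(2σ²)) + exp(−(μ₀−λ)²/(2σ²))]`
for `Y = μ₀ + W`, `W ~ N(0, σ²)`. -/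
theorem expectation_sign_noise_indicator
    {Ω : Type*} [MeasurableSpace Ω] (μpr : Measure Ω) [IsProbabilityMeasure μpr]
    (σ lam μ₀ : ℝ) (hσ : 0 < σ) (hlam : 0 < lam)
    (W : Ω → ℝ) (hmeas : Measurable W)
    (hdist : Measure.map W μpr = gaussianReal 0 ⟨σ ^ 2, sq_nonneg σ⟩) :
    (∫ ω, (if lam < |μ₀ + W ω| then Real.sign (μ₀ + W ω) * W ω else 0) ∂μpr)
      = σ / Real.sqrt (2 * π) *
          (Real.exp (-(μ₀ + lam) ^ 2 / (2 * σ ^ 2)) +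
           Real.exp (-(μ₀ - lam) ^ 2 / (2 * σ ^ 2))) := by
  set v : ℝ≥0 := ⟨σ ^ 2, sq_nonneg σ⟩ with hvdef
  have hvcoe : (v : ℝ) = σ ^ 2 := rfl
  have hv2 : (0:ℝ) < σ ^ 2 := by positivity
  have hv0 : v ≠ 0 := by
    intro h
    have : (v : ℝ) = 0 := by rw [h]; simp
    rw [hvcoe] at this; linarith
  set a : ℝ := lam - μ₀ with hadef
  set b : ℝ := -lam - μ₀ with hbdef
  set g : ℝ → ℝ := fun x => Set.indicator (Set.Ioi a) (fun x => x) x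
      + Set.indicator (Set.Iio b) (fun x => -x) x with hgdef
  have hgeq : ∀ x : ℝ, (if lam < |μ₀ + x| then Real.sign (μ₀ + x) * x else 0) = g x := by
    intro x
    rcases lt_or_ge a x with h1 | h1
    · have hpos : 0 < μ₀ + x := by simp only [hadef] at h1; linarith
      have habs : lam < |μ₀ + x| := by rw [abs_of_pos hpos]; simp only [hadef] at h1; linarith
      have hnb : ¬ x ∈ Set.Iio b := by
        simp only [Set.mem_Iio, hbdef, not_lt]; simp only [hadef] at h1; linarith
      simp [hgdef, habs, Set.indicator_of_mem (Set.mem_Ioi.mpr h1),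
        Set.indicator_of_notMem hnb, Real.sign_of_pos hpos]
    · rcases lt_or_ge x b with h2 | h2
      · have hneg : μ₀ + x < 0 := by simp only [hbdef] at h2; linarith
        have habs : lam < |μ₀ + x| := by
          rw [abs_of_neg hneg]; simp only [hbdef] at h2; linarith
        have hna : ¬ x ∈ Set.Ioi a := by simp only [Set.mem_Ioi, not_lt]; exact h1
        simp [hgdef, habs, Set.indicator_of_mem (Set.mem_Iio.mpr h2),
          Set.indicator_of_notMem hna, Real.sign_of_neg hneg]
      · have habs : ¬ lam < |μ₀ + x| := by
          rw [not_lt, abs_le]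
          constructor
          · simp only [hbdef] at h2; linarith
          · simp only [hadef] at h1; linarith
        have hna : ¬ x ∈ Set.Ioi a := by simp only [Set.mem_Ioi, not_lt]; exact h1
        have hnb : ¬ x ∈ Set.Iio b := by simp only [Set.mem_Iio, not_lt]; exact h2
        simp [hgdef, habs, Set.indicator_of_notMem hna, Set.indicator_of_notMem hnb]
  have hgmeas : Measurable g :=
    (measurable_id.indicator measurableSet_Ioi).add
      (measurable_id.neg.indicator measurableSet_Iio)
  have step1 : (∫ ω, (if lam < |μ₀ + W ω| then Real.sign (μ₀ + W ω) * W ω else 0) ∂μpr)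
      = ∫ x, g x ∂(gaussianReal 0 v) := by
    simp_rw [hgeq]
    rw [← hdist, integral_map hmeas.aemeasurable hgmeas.aestronglyMeasurable]
  rw [step1, gaussianReal_of_var_ne_zero 0 hv0]
  have hpdfmeas : Measurable (fun x => (gaussianPDFReal 0 v x).toNNReal) :=
    (measurable_gaussianPDFReal 0 v).real_toNNReal
  have hwd : (volume.withDensity (gaussianPDF 0 v))
      = volume.withDensity (fun x => ((gaussianPDFReal 0 v x).toNNReal : ℝ≥0∞)) := rfl
  rw [hwd, integral_withDensity_eq_integral_smul hpdfmeas]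
  have hsmul : ∀ x : ℝ, (gaussianPDFReal 0 v x).toNNReal • g x
      = (Real.sqrt (2 * π * σ ^ 2))⁻¹ * Real.exp (-x ^ 2 / (2 * σ ^ 2)) * g x := by
    intro x
    rw [NNReal.smul_def, smul_eq_mul, Real.coe_toNNReal _ (gaussianPDFReal_nonneg 0 v x)]
    congr 1
    simp [gaussianPDFReal, hvcoe]
  simp_rw [hsmul]
  set C : ℝ := (Real.sqrt (2 * π * σ ^ 2))⁻¹ with hCdef
  have hsplit : ∀ x : ℝ, C * Real.exp (-x ^ 2 / (2 * σ ^ 2)) * g x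
      = Set.indicator (Set.Ioi a) (fun x => C * (x * Real.exp (-x ^ 2 / (2 * σ ^ 2)))) x
        + Set.indicator (Set.Iio b) (fun x => C * (-x * Real.exp (-x ^ 2 / (2 * σ ^ 2)))) x := by
    intro x
    simp only [hgdef, Set.indicator_apply]
    split_ifs <;> ring
  simp_rw [hsplit]
  have hint1 : Integrable (Set.indicator (Set.Ioi a)
      (fun x => C * (x * Real.exp (-x ^ 2 / (2 * σ ^ 2))))) := by
    rw [integrable_indicator_iff measurableSet_Ioi]
    exact (((aux_int hv2)).const_mul C).integrableOn
  have hint2 : Integrable (Set.indicator (Set.Iio b)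
      (fun x => C * (-x * Real.exp (-x ^ 2 / (2 * σ ^ 2))))) := by
    rw [integrable_indicator_iff measurableSet_Iio]
    refine Integrable.integrableOn ?_
    have := ((aux_int hv2).neg.const_mul C)
    exact this.congr (ae_of_all _ fun x => by dsimp; ring)
  rw [integral_add hint1 hint2, integral_indicator measurableSet_Ioi,
    integral_indicator measurableSet_Iio, integral_const_mul, integral_const_mul,
    aux_Ioi hv2, aux_Iio hv2]
  have hsqrt : Real.sqrt (2 * π * σ ^ 2) = Real.sqrt (2 * π) * σ := by
    rw [Real.sqrt_mul (by positivity), Real.sqrt_sq hσ.le]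
  have hCval : C * σ ^ 2 = σ / Real.sqrt (2 * π) := by
    rw [hCdef, hsqrt]
    have h2π : Real.sqrt (2 * π) > 0 := Real.sqrt_pos.mpr (by positivity)
    field_simp
  have ha2 : a ^ 2 = (μ₀ - lam) ^ 2 := by rw [hadef]; ring
  have hb2 : b ^ 2 = (μ₀ + lam) ^ 2 := by rw [hbdef]; ring
  rw [ha2, hb2]
  calc C * (σ ^ 2 * Real.exp (-(μ₀ - lam) ^ 2 / (2 * σ ^ 2)))
        + C * (σ ^ 2 * Real.exp (-(μ₀ + lam) ^ 2 / (2 * σ ^ 2)))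
      = (C * σ ^ 2) * (Real.exp (-(μ₀ + lam) ^ 2 / (2 * σ ^ 2))
          + Real.exp (-(μ₀ - lam) ^ 2 / (2 * σ ^ 2))) := by ring
    _ = _ := by rw [hCval]
end

section
/- Let σ > 0, h > 0, a ∈ ℝ, μ ∈ ℝ, and Y ~ N(μ,σ²). Define A(t,a) = (√(σ² + h²)/h)·exp(−(t − a)²/(2h²)). Then Var[A(Y,a)] = ((σ² + h²)/(h·√(2σ² + h²)))·exp(−(μ − a)²/(2σ² + h²)) − exp(−(μ − a)²/(σ² + h²)). -/
open MeasureTheory ProbabilityTheory Filter Real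
open scoped NNReal ENNReal

lemma gauss_exp_integral (μ a c σ : ℝ) (hσ : 0 < σ) (hc : 0 < c) :
    (∫ t, Real.exp (-(t - a) ^ 2 / c) ∂(gaussianReal μ ⟨σ ^ 2, sq_nonneg σ⟩))
      = Real.sqrt (c / (c + 2 * σ ^ 2)) * Real.exp (-(μ - a) ^ 2 / (c + 2 * σ ^ 2)) := by
  have hσ2 : (0:ℝ) < σ ^ 2 := by positivity
  have hv : (⟨σ ^ 2, sq_nonneg σ⟩ : ℝ≥0) ≠ 0 := by
    simp only [ne_eq, ← NNReal.coe_eq_zero]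
    exact ne_of_gt hσ2
  set v : ℝ≥0 := ⟨σ ^ 2, sq_nonneg σ⟩ with hvdef
  rw [gaussianReal_of_var_ne_zero _ hv]
  have hpdf : gaussianPDF μ v = fun x => ((gaussianPDFReal μ v x).toNNReal : ℝ≥0∞) := rfl
  rw [hpdf, integral_withDensity_eq_integral_smul
    ((measurable_gaussianPDFReal μ v).real_toNNReal)]
  have hcv : (v : ℝ) = σ ^ 2 := rfl
  have hcs : c + 2 * σ ^ 2 ≠ 0 := by positivity
  set p : ℝ := (c + 2 * σ ^ 2) / (2 * σ ^ 2 * c) with hp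
  set m : ℝ := (c * μ + 2 * σ ^ 2 * a) / (c + 2 * σ ^ 2) with hm
  have hpt : ∀ t : ℝ,
      ((gaussianPDFReal μ v t).toNNReal : ℝ) • Real.exp (-(t - a) ^ 2 / c)
        = ((Real.sqrt (2 * π * σ ^ 2))⁻¹ * Real.exp (-(μ - a) ^ 2 / (c + 2 * σ ^ 2)))
            * Real.exp (-p * (t - m) ^ 2) := by
    intro t
    have hnn : 0 ≤ gaussianPDFReal μ v t := gaussianPDFReal_nonneg μ v t
    rw [smul_eq_mul, Real.coe_toNNReal _ hnn, gaussianPDFReal, hcv]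
    rw [mul_assoc, ← Real.exp_add]
    conv_rhs => rw [mul_assoc, ← Real.exp_add]
    congr 1
    rw [hp, hm]
    have hc' : c ≠ 0 := hc.ne'
    have hσ' : σ ≠ 0 := hσ.ne'
    field_simp
    congr 1
    rw [div_eq_div_iff (by positivity) (by positivity)]
    ring
  simp only [NNReal.smul_def, hpt]
  rw [integral_const_mul]
  have hint : (∫ t : ℝ, Real.exp (-p * (t - m) ^ 2)) = Real.sqrt (π / p) := by
    rw [integral_sub_right_eq_self (fun t : ℝ => Real.exp (-p * t ^ 2)) m]
    exact integral_gaussian p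
  rw [hint]
  have hppos : 0 < p := by positivity
  have hkey : (Real.sqrt (2 * π * σ ^ 2))⁻¹ * Real.sqrt (π / p)
      = Real.sqrt (c / (c + 2 * σ ^ 2)) := by
    rw [← Real.sqrt_inv, ← Real.sqrt_mul (by positivity)]
    congr 1
    rw [hp]
    field_simp
  rw [show ∀ x y z : ℝ, x⁻¹ * y * z = (x⁻¹ * z) * y from fun x y z => by ring,
    hkey]

/-- for `Y ~ N(μ₀, σ²)` and the scaled Gaussian kernel
`A(t,a) = (√(σ²+h²)/h)·exp(−(t−a)²/(2h²))`, one has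
`Var[A(Y,a)] = ((σ²+h²)/(h√(2σ²+h²)))·exp(−(μ₀−a)²/(2σ²+h²)) − exp(−(μ₀−a)²/(σ²+h²))`. -/
theorem gaussian_kernel_variance (σ h a μ₀ : ℝ) (hσ : 0 < σ) (hh : 0 < h) :
    variance (fun t => Real.sqrt (σ ^ 2 + h ^ 2) / h * Real.exp (-(t - a) ^ 2 / (2 * h ^ 2)))
        (gaussianReal μ₀ ⟨σ ^ 2, sq_nonneg σ⟩)
      = (σ ^ 2 + h ^ 2) / (h * Real.sqrt (2 * σ ^ 2 + h ^ 2)) *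
          Real.exp (-(μ₀ - a) ^ 2 / (2 * σ ^ 2 + h ^ 2)) -
        Real.exp (-(μ₀ - a) ^ 2 / (σ ^ 2 + h ^ 2)) := by
  have hsh : (0:ℝ) < σ ^ 2 + h ^ 2 := by positivity
  set K : ℝ := Real.sqrt (σ ^ 2 + h ^ 2) / h with hK
  have hKpos : 0 < K := div_pos (Real.sqrt_pos.mpr hsh) hh
  set ν := gaussianReal μ₀ (⟨σ ^ 2, sq_nonneg σ⟩ : ℝ≥0) with hν
  have : IsProbabilityMeasure ν := instIsProbabilityMeasureGaussianReal μ₀ _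
  set X : ℝ → ℝ := fun t => K * Real.exp (-(t - a) ^ 2 / (2 * h ^ 2)) with hX
  have hmeas : AEStronglyMeasurable X ν := by
    apply Continuous.aestronglyMeasurable
    fun_prop
  have hbdd : MemLp X 2 ν := by
    apply memLp_of_bounded (a := 0) (b := K) _ hmeas
    filter_upwards with t
    refine ⟨by positivity, ?_⟩
    calc K * Real.exp (-(t - a) ^ 2 / (2 * h ^ 2)) ≤ K * 1 := by
          apply mul_le_mul_of_nonneg_left _ hKpos.le
          rw [Real.exp_le_one_iff]
          apply div_nonpos_of_nonpos_of_nonneg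
          · simp [sq_nonneg]
          · positivity
      _ = K := mul_one K
  rw [variance_eq_sub hbdd]
  have hE1 : (∫ t, X t ∂ν) = Real.exp (-(μ₀ - a) ^ 2 / (2 * h ^ 2 + 2 * σ ^ 2)) := by
    simp only [hX]
    rw [integral_const_mul, gauss_exp_integral μ₀ a (2 * h ^ 2) σ hσ (by positivity)]
    have hs : Real.sqrt (2 * h ^ 2 / (2 * h ^ 2 + 2 * σ ^ 2)) = h / Real.sqrt (σ ^ 2 + h ^ 2) := by
      rw [show 2 * h ^ 2 / (2 * h ^ 2 + 2 * σ ^ 2) = h ^ 2 / (σ ^ 2 + h ^ 2) by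
            field_simp; ring,
        Real.sqrt_div (sq_nonneg h), Real.sqrt_sq hh.le]
    rw [hs, hK, ← mul_assoc]
    rw [div_mul_div_comm, mul_comm (Real.sqrt (σ ^ 2 + h ^ 2)) h,
      div_self (by positivity), one_mul]
  have hE2 : (∫ t, (X ^ 2) t ∂ν)
      = (σ ^ 2 + h ^ 2) / (h * Real.sqrt (2 * σ ^ 2 + h ^ 2)) *
          Real.exp (-(μ₀ - a) ^ 2 / (2 * σ ^ 2 + h ^ 2)) := by
    have hptsq : ∀ t : ℝ, (X ^ 2) t = K ^ 2 * Real.exp (-(t - a) ^ 2 / h ^ 2) := by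
      intro t
      simp only [Pi.pow_apply, hX, mul_pow, ← Real.exp_nat_mul]
      congr 1
      field_simp
      ring
    simp only [hptsq]
    rw [integral_const_mul, gauss_exp_integral μ₀ a (h ^ 2) σ hσ (by positivity)]
    have hK2 : K ^ 2 = (σ ^ 2 + h ^ 2) / h ^ 2 := by
      rw [hK, div_pow, Real.sq_sqrt hsh.le]
    have hs : Real.sqrt (h ^ 2 / (h ^ 2 + 2 * σ ^ 2)) = h / Real.sqrt (2 * σ ^ 2 + h ^ 2) := by
      rw [Real.sqrt_div (sq_nonneg h), Real.sqrt_sq hh.le, add_comm (h ^ 2)]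
    rw [hK2, hs, show h ^ 2 + 2 * σ ^ 2 = 2 * σ ^ 2 + h ^ 2 by ring, ← mul_assoc]
    congr 1
    rw [div_mul_div_comm, div_eq_div_iff (by positivity) (by positivity)]
    ring
  rw [show (fun t => Real.sqrt (σ ^ 2 + h ^ 2) / h * Real.exp (-(t - a) ^ 2 / (2 * h ^ 2))) = X
      from rfl]
  rw [hE2, hE1, ← Real.exp_nat_mul]
  congr 2
  field_simp
  ring
end

section
/- Let σ > 0, a ∈ ℝ, let x0 : ℕ → ℝ be a fixed real sequence, let (W_i)_{i∈ℕ} be i.i.d. centered Gaussian random variables of variance σ², and set Y_i = x0_i + W_i. Let h : ℕ → (0,∞) satisfy h(P) → 0 as P → ∞, and define A_h(t,a) = (√(σ² + h²)/h)·exp(−(t − a)²/(2h²)). Then (1/P)·(Σ_{i=1}^P E[A_{h(P)}(Y_i,a)] − Σ_{i=1}^P exp(−(x0_i − a)²/(2σ²))) → 0 as P → ∞. -/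
open MeasureTheory ProbabilityTheory Filter Real

/-- The scaled Gaussian kernel `A_h(t,a) = (√(σ²+h²)/h)·exp(−(t−a)²/(2h²))`. -/
noncomputable def kernelA (σ h t a : ℝ) : ℝ :=
  Real.sqrt (σ ^ 2 + h ^ 2) / h * Real.exp (-(t - a) ^ 2 / (2 * h ^ 2))

lemma gauss_shift (b m : ℝ) (hb : 0 < b) :
    ∫ x : ℝ, Real.exp (-b * (x + m) ^ 2) = Real.sqrt (π / b) := by
  rw [integral_add_right_eq_self (fun x : ℝ => Real.exp (-b * x ^ 2)) m]
  exact integral_gaussian b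

lemma gauss_conv (p q c : ℝ) (hp : 0 < p) (hq : 0 < q) :
    ∫ x : ℝ, Real.exp (-x ^ 2 / (2 * p)) * Real.exp (-(x + c) ^ 2 / (2 * q)) =
      Real.sqrt (2 * π * p * q / (p + q)) * Real.exp (-c ^ 2 / (2 * (p + q))) := by
  have hpq : 0 < p + q := by linarith
  have hb : 0 < (p + q) / (2 * p * q) := by positivity
  have key : ∀ x : ℝ, Real.exp (-x ^ 2 / (2 * p)) * Real.exp (-(x + c) ^ 2 / (2 * q)) =
      Real.exp (-((p + q) / (2 * p * q)) * (x + p * c / (p + q)) ^ 2) *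
        Real.exp (-c ^ 2 / (2 * (p + q))) := by
    intro x
    rw [← Real.exp_add, ← Real.exp_add]
    congr 1
    field_simp
    ring
  simp_rw [key]
  rw [integral_mul_const, gauss_shift _ _ hb]
  congr 2
  rw [div_div_eq_mul_div]
  ring

lemma kernel_expectation (σ h x0 a : ℝ) (hσ : 0 < σ) (hh : 0 < h) :
    ∫ w, kernelA σ h (x0 + w) a ∂(gaussianReal 0 ⟨σ ^ 2, sq_nonneg σ⟩) =
      Real.exp (-(x0 - a) ^ 2 / (2 * (σ ^ 2 + h ^ 2))) := by
  have hσ2 : (0:ℝ) < σ ^ 2 := by positivity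
  have hv : (⟨σ ^ 2, sq_nonneg σ⟩ : NNReal) ≠ 0 := by
    intro hc
    have := congrArg (fun x : NNReal => (x : ℝ)) hc
    change σ ^ 2 = 0 at this
    exact absurd this (by positivity)
  rw [gaussianReal_of_var_ne_zero _ hv]
  have hrfl : volume.withDensity (gaussianPDF 0 ⟨σ ^ 2, sq_nonneg σ⟩) =
      volume.withDensity
        (fun x => ((gaussianPDFReal 0 (⟨σ ^ 2, sq_nonneg σ⟩ : NNReal) x).toNNReal : ENNReal)) := rfl
  rw [hrfl, integral_withDensity_eq_integral_smul
    (measurable_gaussianPDFReal 0 ⟨σ ^ 2, sq_nonneg σ⟩).real_toNNReal]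
  have hC : ∀ x : ℝ,
      (gaussianPDFReal 0 (⟨σ ^ 2, sq_nonneg σ⟩ : NNReal) x).toNNReal • kernelA σ h (x0 + x) a =
        ((Real.sqrt (2 * π * σ ^ 2))⁻¹ * (Real.sqrt (σ ^ 2 + h ^ 2) / h)) *
          (Real.exp (-x ^ 2 / (2 * σ ^ 2)) * Real.exp (-(x + (x0 - a)) ^ 2 / (2 * h ^ 2))) := by
    intro x
    rw [NNReal.smul_def, Real.coe_toNNReal _ (gaussianPDFReal_nonneg 0 ⟨σ ^ 2, sq_nonneg σ⟩ x)]
    simp only [gaussianPDFReal, kernelA, sub_zero, NNReal.coe_mk]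
    have e1 : x0 + x - a = x + (x0 - a) := by ring
    rw [e1, smul_eq_mul]
    erw [NNReal.coe_mk]
    ring
  simp_rw [hC]
  rw [integral_const_mul, gauss_conv _ _ _ hσ2 (by positivity)]
  have hs : Real.sqrt (2 * π * σ ^ 2 * h ^ 2 / (σ ^ 2 + h ^ 2)) =
      Real.sqrt (2 * π * σ ^ 2) * h / Real.sqrt (σ ^ 2 + h ^ 2) := by
    rw [Real.sqrt_div (by positivity), Real.sqrt_mul (by positivity), Real.sqrt_sq hh.le]
  rw [hs, ← mul_assoc]
  have h1 : (0:ℝ) < Real.sqrt (2 * π * σ ^ 2) := Real.sqrt_pos.mpr (by positivity)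
  have h2 : (0:ℝ) < Real.sqrt (σ ^ 2 + h ^ 2) := Real.sqrt_pos.mpr (by positivity)
  field_simp

lemma term_bound (s t u : ℝ) (hs : 0 < s) (ht : 0 < t) (hu : 0 ≤ u) :
    |Real.exp (-u / (2 * (s + t))) - Real.exp (-u / (2 * s))| ≤ t / s := by
  have hst : 0 < s + t := by linarith
  rw [neg_div, neg_div]
  set A := u / (2 * (s + t)) with hAdef
  set δ := A * (t / s) with hδdef
  have hA : 0 ≤ A := by rw [hAdef]; positivity
  have hδ0 : 0 ≤ δ := by rw [hδdef, hAdef]; positivity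
  have hsplit : -(u / (2 * s)) = -A + -δ := by
    rw [hδdef, hAdef]; field_simp; ring
  rw [hsplit, Real.exp_add]
  have h2 : Real.exp (-δ) ≤ 1 := Real.exp_le_one_iff.mpr (by linarith)
  have hnn : 0 ≤ Real.exp (-A) - Real.exp (-A) * Real.exp (-δ) := by
    have := Real.exp_pos (-A)
    nlinarith
  rw [abs_of_nonneg hnn]
  have h1 : 1 - Real.exp (-δ) ≤ δ := by nlinarith [Real.add_one_le_exp (-δ)]
  have h3 : A * Real.exp (-A) ≤ 1 := by
    have l3 := Real.add_one_le_exp A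
    have l4 : Real.exp (-A) * Real.exp A = 1 := by rw [← Real.exp_add]; simp
    have l5 := Real.exp_pos (-A)
    nlinarith
  calc Real.exp (-A) - Real.exp (-A) * Real.exp (-δ)
      = Real.exp (-A) * (1 - Real.exp (-δ)) := by ring
    _ ≤ Real.exp (-A) * δ := mul_le_mul_of_nonneg_left h1 (Real.exp_pos _).le
    _ = (A * Real.exp (-A)) * (t / s) := by rw [hδdef]; ring
    _ ≤ 1 * (t / s) := mul_le_mul_of_nonneg_right h3 (by positivity)
    _ = t / s := one_mul _

/-- the averaged expectations of the scaled Gaussian kernel converge to those of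
the limiting Gaussian: `(1/P)(∑_{i<P} E[A_{h(P)}(Y_i,a)] − ∑_{i<P} exp(−(x0_i−a)²/(2σ²))) → 0`. -/
theorem kernel_expectation_average_limit
    {Ω : Type*} [MeasurableSpace Ω] (μpr : Measure Ω) [IsProbabilityMeasure μpr]
    (σ a : ℝ) (hσ : 0 < σ)
    (x0 : ℕ → ℝ) (W : ℕ → Ω → ℝ)
    (hmeas : ∀ i, Measurable (W i))
    (hindep : iIndepFun W μpr)
    (hdist : ∀ i, Measure.map (W i) μpr = gaussianReal 0 ⟨σ ^ 2, sq_nonneg σ⟩)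
    (h : ℕ → ℝ) (hpos : ∀ P, 0 < h P)
    (hh0 : Tendsto h atTop (nhds 0)) :
    Tendsto
      (fun P : ℕ => (1 / (P : ℝ)) *
        ((∑ i ∈ Finset.range P, ∫ ω, kernelA σ (h P) (x0 i + W i ω) a ∂μpr) -
          ∑ i ∈ Finset.range P, Real.exp (-(x0 i - a) ^ 2 / (2 * σ ^ 2))))
      atTop (nhds 0) := by
  have hrw : ∀ P i, ∫ ω, kernelA σ (h P) (x0 i + W i ω) a ∂μpr =
      Real.exp (-(x0 i - a) ^ 2 / (2 * (σ ^ 2 + (h P) ^ 2))) := by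
    intro P i
    have hcont : Continuous fun t : ℝ => kernelA σ (h P) (x0 i + t) a := by
      unfold kernelA; fun_prop
    calc ∫ ω, kernelA σ (h P) (x0 i + W i ω) a ∂μpr
        = ∫ t, kernelA σ (h P) (x0 i + t) a ∂(Measure.map (W i) μpr) :=
          (integral_map (hmeas i).aemeasurable hcont.aestronglyMeasurable).symm
      _ = _ := by rw [hdist i]; exact kernel_expectation σ (h P) (x0 i) a hσ (hpos P)
  apply squeeze_zero_norm (a := fun P => (h P) ^ 2 / σ ^ 2)
  · intro P
    simp only [hrw]
    rw [← Finset.sum_sub_distrib, Real.norm_eq_abs, abs_mul]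
    rcases Nat.eq_zero_or_pos P with hP | hP
    · subst hP; simp; positivity
    have hPne : (P : ℝ) ≠ 0 := Nat.cast_ne_zero.mpr hP.ne'
    calc |1 / (P : ℝ)| * |∑ i ∈ Finset.range P,
          (Real.exp (-(x0 i - a) ^ 2 / (2 * (σ ^ 2 + (h P) ^ 2))) -
            Real.exp (-(x0 i - a) ^ 2 / (2 * σ ^ 2)))|
        ≤ |1 / (P : ℝ)| * ∑ i ∈ Finset.range P, ((h P) ^ 2 / σ ^ 2) := by
          gcongr
          refine le_trans (Finset.abs_sum_le_sum_abs _ _) (Finset.sum_le_sum fun i _ => ?_)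
          exact term_bound (σ ^ 2) ((h P) ^ 2) ((x0 i - a) ^ 2)
            (by positivity) (pow_pos (hpos P) 2) (by positivity)
      _ = (h P) ^ 2 / σ ^ 2 := by
          rw [Finset.sum_const, Finset.card_range, nsmul_eq_mul,
            abs_of_nonneg (by positivity : (0:ℝ) ≤ 1 / (P : ℝ))]
          field_simp
  · have := (hh0.pow 2).div_const (σ ^ 2)
    simpa using this
end

section
/- Let σ > 0, a ∈ ℝ, let x0 : ℕ → ℝ be a fixed real sequence, let (W_i)_{i∈ℕ} be i.i.d. centered Gaussian random variables of variance σ², and set Y_i = x0_i + W_i. Let h : ℕ → (0,∞) satisfy h(P) → 0 and 1/(P·h(P)) → 0 as P → ∞, and define A_h(t,a) = (√(σ² + h²)/h)·exp(−(t − a)²/(2h²)). Then Var[(1/P)·Σ_{i=1}^P A_{h(P)}(Y_i,a)] = (1/P²)·Σ_{i=1}^P Var[A_{h(P)}(Y_i,a)] → 0 as P → ∞. -/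
open MeasureTheory ProbabilityTheory Filter Real
open scoped NNReal ENNReal

lemma kernelA_nonneg (σ h t a : ℝ) (hh : 0 < h) : 0 ≤ kernelA σ h t a := by
  unfold kernelA; positivity

lemma kernelA_le (σ h t a : ℝ) (hh : 0 < h) :
    kernelA σ h t a ≤ Real.sqrt (σ ^ 2 + h ^ 2) / h := by
  unfold kernelA
  nth_rewrite 2 [← mul_one (Real.sqrt (σ ^ 2 + h ^ 2) / h)]
  refine mul_le_mul_of_nonneg_left ?_ (by positivity)
  refine Real.exp_le_one_iff.mpr ?_
  exact div_nonpos_of_nonpos_of_nonneg (neg_nonpos.mpr (sq_nonneg _)) (by positivity)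

lemma kernelA_continuous (σ h a : ℝ) : Continuous fun t => kernelA σ h t a := by
  unfold kernelA; fun_prop

lemma kernelA_sq (σ h t a : ℝ) (hh : 0 < h) :
    (kernelA σ h t a) ^ 2 = (σ ^ 2 + h ^ 2) / h ^ 2 *
      Real.exp (-(1 / h ^ 2) * (t - a) ^ 2) := by
  unfold kernelA
  rw [mul_pow, div_pow, Real.sq_sqrt (by positivity), ← Real.exp_nat_mul]
  congr 1
  have : (h : ℝ) ≠ 0 := ne_of_gt hh
  field_simp
  ring

lemma integrable_kernelA_sq (σ h a : ℝ) (hσ : 0 < σ) (hh : 0 < h) :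
    Integrable (fun t => (kernelA σ h t a) ^ 2) volume := by
  have : (fun t => (kernelA σ h t a) ^ 2)
      = fun t => (σ ^ 2 + h ^ 2) / h ^ 2 * Real.exp (-(1 / h ^ 2) * (t - a) ^ 2) := by
    funext t; exact kernelA_sq σ h t a hh
  rw [this]
  exact ((integrable_exp_neg_mul_sq (by positivity)).comp_sub_right a).const_mul _

lemma integral_kernelA_sq_gaussian_le (m σ hb a : ℝ) (hσ : 0 < σ) (hh : 0 < hb) :
    ∫ x, (kernelA σ hb x a) ^ 2 ∂(gaussianReal m ⟨σ ^ 2, sq_nonneg σ⟩) ≤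
      (σ ^ 2 + hb ^ 2) / (hb * σ * Real.sqrt 2) := by
  set v : ℝ≥0 := ⟨σ ^ 2, sq_nonneg σ⟩ with hvdef
  have hv : v ≠ 0 := by
    intro hv0
    have : (v : ℝ) = 0 := by rw [hv0]; simp
    simp only [hvdef, NNReal.coe_mk] at this
    have h' : σ ^ 2 = 0 := this
    nlinarith
  have hvr : (v : ℝ) = σ ^ 2 := rfl
  have hfmeas : Measurable fun x => (gaussianPDFReal m v x).toNNReal :=
    (measurable_gaussianPDFReal m v).real_toNNReal
  have hgauss : gaussianReal m v
      = volume.withDensity fun x => ((gaussianPDFReal m v x).toNNReal : ℝ≥0∞) := by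
    rw [gaussianReal_of_var_ne_zero _ hv]; rfl
  rw [hgauss, integral_withDensity_eq_integral_smul hfmeas]
  have hsmul : (fun x => (gaussianPDFReal m v x).toNNReal • (kernelA σ hb x a) ^ 2)
      = fun x => gaussianPDFReal m v x * (kernelA σ hb x a) ^ 2 := by
    funext x
    rw [NNReal.smul_def, Real.coe_toNNReal _ (gaussianPDFReal_nonneg m v x), smul_eq_mul]
  rw [hsmul]
  set C : ℝ := (Real.sqrt (2 * π * σ ^ 2))⁻¹ with hCdef
  have hCpos : 0 < C := by
    rw [hCdef]
    have : (0:ℝ) < 2 * π * σ ^ 2 := by positivity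
    positivity
  have hpdf_le : ∀ x, gaussianPDFReal m v x ≤ C := by
    intro x
    rw [gaussianPDFReal, hvr, hCdef]
    calc (Real.sqrt (2 * π * σ ^ 2))⁻¹ * rexp (- (x - m) ^ 2 / (2 * σ ^ 2))
        ≤ (Real.sqrt (2 * π * σ ^ 2))⁻¹ * 1 := by
          refine mul_le_mul_of_nonneg_left ?_ (by positivity)
          refine Real.exp_le_one_iff.mpr ?_
          exact div_nonpos_of_nonpos_of_nonneg (neg_nonpos.mpr (sq_nonneg _)) (by positivity)
      _ = (Real.sqrt (2 * π * σ ^ 2))⁻¹ := mul_one _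
  have hkint := integrable_kernelA_sq σ hb a hσ hh
  have hprod_int : Integrable (fun x => gaussianPDFReal m v x * (kernelA σ hb x a) ^ 2)
      volume := by
    refine Integrable.mono' (hkint.const_mul C) ?_ (ae_of_all _ fun x => ?_)
    · exact ((measurable_gaussianPDFReal m v).mul
        ((kernelA_continuous σ hb a).measurable.pow_const 2)).aestronglyMeasurable
    · rw [Real.norm_eq_abs, abs_of_nonneg (mul_nonneg (gaussianPDFReal_nonneg m v x)
        (sq_nonneg _))]
      exact mul_le_mul_of_nonneg_right (hpdf_le x) (sq_nonneg _)
  calc ∫ x, gaussianPDFReal m v x * (kernelA σ hb x a) ^ 2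
      ≤ ∫ x, C * (kernelA σ hb x a) ^ 2 := by
        refine integral_mono hprod_int (hkint.const_mul C) fun x => ?_
        exact mul_le_mul_of_nonneg_right (hpdf_le x) (sq_nonneg _)
    _ = C * ∫ x, (kernelA σ hb x a) ^ 2 := integral_const_mul _ _
    _ ≤ (σ ^ 2 + hb ^ 2) / (hb * σ * Real.sqrt 2) := by
        have hint : ∫ x, (kernelA σ hb x a) ^ 2
            = (σ ^ 2 + hb ^ 2) / hb ^ 2 * (Real.sqrt π * hb) := by
          have h1 : (fun x : ℝ => (kernelA σ hb x a) ^ 2)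
              = fun x => (σ ^ 2 + hb ^ 2) / hb ^ 2
                * Real.exp (-(1 / hb ^ 2) * (x - a) ^ 2) := by
            funext x; exact kernelA_sq σ hb x a hh
          rw [h1, integral_const_mul]
          congr 1
          rw [show (fun x : ℝ => Real.exp (-(1 / hb ^ 2) * (x - a) ^ 2))
              = fun x => (fun y => Real.exp (-(1 / hb ^ 2) * y ^ 2)) (x - a) from rfl,
            integral_sub_right_eq_self (fun y => Real.exp (-(1 / hb ^ 2) * y ^ 2)) a,
            integral_gaussian]
          rw [show π / (1 / hb ^ 2) = π * hb ^ 2 by field_simp,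
            Real.sqrt_mul (le_of_lt Real.pi_pos), Real.sqrt_sq (le_of_lt hh)]
        rw [hint, hCdef]
        apply le_of_eq
        have hs2 : Real.sqrt (2 * π * σ ^ 2)
            = Real.sqrt 2 * Real.sqrt π * σ := by
          rw [Real.sqrt_mul (by positivity), Real.sqrt_mul (by norm_num),
            Real.sqrt_sq (le_of_lt hσ)]
        rw [hs2]
        have h2 : Real.sqrt 2 ≠ 0 := by positivity
        have hp : Real.sqrt π ≠ 0 := by
          have := Real.pi_pos; positivity
        field_simp

/-- `Var[(1/P)∑_{i<P} A_{h(P)}(Y_i,a)] = (1/P²)∑_{i<P} Var[A_{h(P)}(Y_i,a)]`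
and this quantity tends to `0` as `P → ∞`. -/
theorem kernel_average_variance_vanishes
    {Ω : Type*} [MeasurableSpace Ω] (μpr : Measure Ω) [IsProbabilityMeasure μpr]
    (σ a : ℝ) (hσ : 0 < σ)
    (x0 : ℕ → ℝ) (W : ℕ → Ω → ℝ)
    (hmeas : ∀ i, Measurable (W i))
    (hindep : iIndepFun W μpr)
    (hdist : ∀ i, Measure.map (W i) μpr = gaussianReal 0 ⟨σ ^ 2, sq_nonneg σ⟩)
    (h : ℕ → ℝ) (hpos : ∀ P, 0 < h P)
    (hh0 : Tendsto h atTop (nhds 0))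
    (hPh : Tendsto (fun P : ℕ => 1 / ((P : ℝ) * h P)) atTop (nhds 0)) :
    (∀ P : ℕ,
      variance (fun ω => (1 / (P : ℝ)) *
          ∑ i ∈ Finset.range P, kernelA σ (h P) (x0 i + W i ω) a) μpr
        = (1 / (P : ℝ) ^ 2) *
            ∑ i ∈ Finset.range P,
              variance (fun ω => kernelA σ (h P) (x0 i + W i ω) a) μpr) ∧
    Tendsto
      (fun P : ℕ =>
        variance (fun ω => (1 / (P : ℝ)) *
          ∑ i ∈ Finset.range P, kernelA σ (h P) (x0 i + W i ω) a) μpr)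
      atTop (nhds 0) := by
  have hXmeas : ∀ P i, Measurable fun ω => kernelA σ (h P) (x0 i + W i ω) a := by
    intro P i
    exact (kernelA_continuous σ (h P) a).measurable.comp ((hmeas i).const_add (x0 i))
  have hXmem : ∀ P i, MemLp (fun ω => kernelA σ (h P) (x0 i + W i ω) a) 2 μpr := by
    intro P i
    refine MemLp.of_bound ((hXmeas P i).aestronglyMeasurable)
      (Real.sqrt (σ ^ 2 + (h P) ^ 2) / h P) (ae_of_all _ fun ω => ?_)
    rw [Real.norm_eq_abs, abs_of_nonneg (kernelA_nonneg _ _ _ _ (hpos P))]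
    exact kernelA_le _ _ _ _ (hpos P)
  have hindep' : ∀ P, iIndepFun
      (fun i ω => kernelA σ (h P) (x0 i + W i ω) a) μpr := by
    intro P
    exact hindep.comp (fun i t => kernelA σ (h P) (x0 i + t) a)
      (fun i => (kernelA_continuous σ (h P) a).measurable.comp (measurable_const_add (x0 i)))
  have part1 : ∀ P : ℕ,
      variance (fun ω => (1 / (P : ℝ)) *
          ∑ i ∈ Finset.range P, kernelA σ (h P) (x0 i + W i ω) a) μpr
        = (1 / (P : ℝ) ^ 2) *
            ∑ i ∈ Finset.range P,
              variance (fun ω => kernelA σ (h P) (x0 i + W i ω) a) μpr := by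
    intro P
    rw [variance_const_mul (1 / (P : ℝ))
      (fun ω => ∑ i ∈ Finset.range P, kernelA σ (h P) (x0 i + W i ω) a) μpr]
    have hsum : (fun ω => ∑ i ∈ Finset.range P, kernelA σ (h P) (x0 i + W i ω) a)
        = ∑ i ∈ Finset.range P, fun ω => kernelA σ (h P) (x0 i + W i ω) a := by
      funext ω; simp
    rw [hsum, IndepFun.variance_sum (fun i _ => hXmem P i)
      (fun i _ j _ hij => (hindep' P).indepFun hij), div_pow, one_pow]
  refine ⟨part1, ?_⟩
  -- variance bound for each summand
  have hvar_le : ∀ P i, variance (fun ω => kernelA σ (h P) (x0 i + W i ω) a) μpr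
      ≤ (σ ^ 2 + (h P) ^ 2) / (h P * σ * Real.sqrt 2) := by
    intro P i
    refine le_trans (variance_le_expectation_sq ((hXmeas P i).aestronglyMeasurable)) ?_
    have hmap : Measure.map (fun ω => x0 i + W i ω) μpr
        = gaussianReal (x0 i) ⟨σ ^ 2, sq_nonneg σ⟩ := by
      have hcomp : (fun ω => x0 i + W i ω) = (fun t => x0 i + t) ∘ W i := rfl
      rw [hcomp, ← Measure.map_map (measurable_const_add (x0 i)) (hmeas i), hdist i]
      have := gaussianReal_map_const_add (μ := 0) (v := ⟨σ ^ 2, sq_nonneg σ⟩) (x0 i)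
      rw [zero_add] at this
      exact this
    have heq : (μpr[(fun ω => kernelA σ (h P) (x0 i + W i ω) a) ^ 2])
        = ∫ x, (kernelA σ (h P) x a) ^ 2 ∂(gaussianReal (x0 i) ⟨σ ^ 2, sq_nonneg σ⟩) := by
      rw [← hmap, integral_map (((hmeas i).const_add (x0 i)).aemeasurable)
        ((kernelA_continuous σ (h P) a).measurable.pow_const 2).aestronglyMeasurable]
      rfl
    rw [heq]
    exact integral_kernelA_sq_gaussian_le (x0 i) σ (h P) a hσ (hpos P)
  set V : ℕ → ℝ := fun P =>
    variance (fun ω => (1 / (P : ℝ)) *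
      ∑ i ∈ Finset.range P, kernelA σ (h P) (x0 i + W i ω) a) μpr with hVdef
  set U : ℕ → ℝ := fun P =>
    (σ ^ 2 + (h P) ^ 2) / (σ * Real.sqrt 2) * (1 / ((P : ℝ) * h P)) with hUdef
  have hU0 : Tendsto U atTop (nhds 0) := by
    rw [hUdef]
    have h1 : Tendsto (fun P => (σ ^ 2 + (h P) ^ 2) / (σ * Real.sqrt 2)) atTop
        (nhds ((σ ^ 2 + 0 ^ 2) / (σ * Real.sqrt 2))) :=
      (tendsto_const_nhds.add (hh0.pow 2)).div_const _
    have h0 := h1.mul hPh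
    have heq : (σ ^ 2 + (0:ℝ) ^ 2) / (σ * Real.sqrt 2) * 0 = 0 := by ring
    rwa [heq] at h0
  have hge : ∀ P, 0 ≤ V P := fun P => variance_nonneg _ _
  have hle : ∀ P, V P ≤ U P := by
    intro P
    rcases Nat.eq_zero_or_pos P with hP | hP
    · subst hP
      rw [hVdef, hUdef]
      simp [part1 0, show (fun _ : Ω => (0:ℝ)) = 0 from rfl]
    · have hPnz : ((P : ℝ)) ≠ 0 := Nat.cast_ne_zero.mpr (Nat.pos_iff_ne_zero.mp hP)
      have hPpos : (0:ℝ) < P := Nat.cast_pos.mpr hP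
      rw [hVdef]
      simp only
      rw [part1 P]
      have hsum_le : ∑ i ∈ Finset.range P,
          variance (fun ω => kernelA σ (h P) (x0 i + W i ω) a) μpr
          ≤ (P : ℝ) * ((σ ^ 2 + (h P) ^ 2) / (h P * σ * Real.sqrt 2)) := by
        calc ∑ i ∈ Finset.range P,
            variance (fun ω => kernelA σ (h P) (x0 i + W i ω) a) μpr
            ≤ (Finset.range P).card • ((σ ^ 2 + (h P) ^ 2) / (h P * σ * Real.sqrt 2)) :=
              Finset.sum_le_card_nsmul _ _ _ (fun i _ => hvar_le P i)
          _ = (P : ℝ) * ((σ ^ 2 + (h P) ^ 2) / (h P * σ * Real.sqrt 2)) := by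
              rw [nsmul_eq_mul, Finset.card_range]
      calc (1 / (P : ℝ) ^ 2) * ∑ i ∈ Finset.range P,
          variance (fun ω => kernelA σ (h P) (x0 i + W i ω) a) μpr
          ≤ (1 / (P : ℝ) ^ 2) * ((P : ℝ) * ((σ ^ 2 + (h P) ^ 2) / (h P * σ * Real.sqrt 2))) :=
            mul_le_mul_of_nonneg_left hsum_le (by positivity)
        _ = U P := by
            rw [hUdef]
            have hh' : h P ≠ 0 := ne_of_gt (hpos P)
            have hs2 : Real.sqrt 2 ≠ 0 := by positivity
            have hσ' : σ ≠ 0 := ne_of_gt hσ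
            field_simp
  exact tendsto_of_tendsto_of_tendsto_of_le_of_le tendsto_const_nhds hU0 hge hle
end
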